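/- (Logit is lower bounded by reward) Let J be finite nonempty with positive weights p(j) summing to 1, r : J → ℝ, s ∈ ℝ. Set P = Σ_j p(j)·exp(s)/(exp(s)+exp(r(j))) and C = log(Σ_j p(j)·exp(r(j))). Then 0 < P < 1 and log(P/(1−P)) ≥ s − C. -/

import Mathlib

theorem logit_lower_bounded_by_reward (J : Type*) [Fintype J] [Nonempty J]
    (p : J → ℝ) (hp : ∀ j, 0 < p j) (hsum : ∑ j, p j = 1) (r : J → ℝ) (s : ℝ)
    (P C : ℝ)
    (hP : P = ∑ j, p j * (Real.exp s / (Real.exp s + Real.exp (r j))))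
    (hC : C = Real.log (∑ j, p j * Real.exp (r j))) :
    0 < P ∧ P < 1 ∧ Real.log (P / (1 - P)) ≥ s - C := by
  have es : (0:ℝ) < Real.exp s := Real.exp_pos s
  have hxpos : ∀ j, (0:ℝ) < Real.exp (r j) := fun j => Real.exp_pos _
  have hD : ∀ j, (0:ℝ) < Real.exp s + Real.exp (r j) := fun j => by positivity
  have hE : (0:ℝ) < ∑ j, p j * Real.exp (r j) :=
    Finset.sum_pos (fun j _ => by have := hp j; have := hxpos j; positivity)
      Finset.univ_nonempty
  have hPpos : 0 < P := by
    rw [hP]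
    exact Finset.sum_pos (fun j _ => by
      have := hp j; have := hD j; positivity) Finset.univ_nonempty
  have h1P : 1 - P = ∑ j, p j * (Real.exp (r j) / (Real.exp s + Real.exp (r j))) := by
    rw [hP, ← hsum, ← Finset.sum_sub_distrib]
    refine Finset.sum_congr rfl fun j _ => ?_
    have := (hD j).ne'
    field_simp
    ring
  have h1Ppos : 0 < 1 - P := by
    rw [h1P]
    exact Finset.sum_pos (fun j _ => by
      have := hp j; have := hD j; have := hxpos j; positivity) Finset.univ_nonempty
  -- key inequality
  set F : J → J → ℝ := fun j k =>
    p j * p k * Real.exp s * (Real.exp (r k) - Real.exp (r j)) /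
      (Real.exp s + Real.exp (r j)) with hF
  have hFsym : ∀ j k, 0 ≤ F j k + F k j := by
    intro j k
    have h1 := (hD j).ne'
    have h2 := (hD k).ne'
    have : F j k + F k j =
        p j * p k * Real.exp s * (Real.exp (r k) - Real.exp (r j))^2 /
          ((Real.exp s + Real.exp (r j)) * (Real.exp s + Real.exp (r k))) := by
      rw [hF]; field_simp; ring
    rw [this]
    have := hp j; have := hp k; have := hD j; have := hD k
    positivity
  have hFsum : 0 ≤ ∑ j, ∑ k, F j k := by
    have h2 : 2 * (∑ j, ∑ k, F j k) = ∑ j, ∑ k, (F j k + F k j) := by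
      rw [two_mul]
      nth_rewrite 2 [Finset.sum_comm]
      rw [← Finset.sum_add_distrib]
      refine Finset.sum_congr rfl fun j _ => ?_
      rw [← Finset.sum_add_distrib]
    nlinarith [Finset.sum_nonneg (fun j (_ : j ∈ Finset.univ) =>
      Finset.sum_nonneg (fun k (_ : k ∈ Finset.univ) => hFsym j k))]
  have key : Real.exp s * (1 - P) ≤ P * (∑ j, p j * Real.exp (r j)) := by
    have hL : Real.exp s * (1 - P) =
        ∑ j, ∑ k, p j * p k * Real.exp s * Real.exp (r j) /
          (Real.exp s + Real.exp (r j)) := by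
      rw [h1P, Finset.mul_sum]
      refine Finset.sum_congr rfl fun j _ => ?_
      have h2 : (∑ k : J, p j * p k * Real.exp s * Real.exp (r j) /
          (Real.exp s + Real.exp (r j))) = (∑ k : J, p k) *
          (p j * Real.exp s * Real.exp (r j) / (Real.exp s + Real.exp (r j))) := by
        rw [Finset.sum_mul]
        exact Finset.sum_congr rfl fun k _ => by ring
      rw [h2, hsum, one_mul]
      ring
    have hR : P * (∑ k, p k * Real.exp (r k)) =
        ∑ j, ∑ k, p j * p k * Real.exp s * Real.exp (r k) /
          (Real.exp s + Real.exp (r j)) := by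
      rw [hP, Finset.sum_mul]
      refine Finset.sum_congr rfl fun j _ => ?_
      rw [Finset.mul_sum]
      refine Finset.sum_congr rfl fun k _ => ?_
      field_simp
    have hdiff : P * (∑ k, p k * Real.exp (r k)) - Real.exp s * (1 - P)
        = ∑ j, ∑ k, F j k := by
      rw [hL, hR, ← Finset.sum_sub_distrib]
      refine Finset.sum_congr rfl fun j _ => ?_
      rw [← Finset.sum_sub_distrib]
      refine Finset.sum_congr rfl fun k _ => ?_
      rw [hF]
      ring
    linarith [hdiff ▸ hFsum]
  refine ⟨hPpos, by linarith, ?_⟩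
  have hfrac : Real.exp s / (∑ j, p j * Real.exp (r j)) ≤ P / (1 - P) := by
    rw [div_le_div_iff₀ hE h1Ppos]
    linarith
  calc s - C = Real.log (Real.exp s / (∑ j, p j * Real.exp (r j))) := by
        rw [hC, Real.log_div (Real.exp_ne_zero s) hE.ne', Real.log_exp]
    _ ≤ Real.log (P / (1 - P)) := Real.log_le_log (by positivity) hfrac
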